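/- Let X be a compact metric space, ρ a finite Borel measure on X, and let (u_n) be a sequence of nonnegative functions in L¹(X, ρ); let ρ_n := ρ.withDensity u_n be the measures with densities u_n. Then (u_n) converges weakly in L¹(X, ρ) to some function h ∈ L¹(X, ρ) if and only if for every Borel set A ⊆ X the sequence (ρ_n(A)) converges to a finite limit; moreover, in that case the set function A ↦ lim_n ρ_n(A) is exactly the measure ρ.withDensity h. -/

import Mathlib

open MeasureTheory Filter Topology Set ENNReal

set_option synthInstance.maxHeartbeats 1000000
set_option maxHeartbeats 1000000

/-- `uₙ ⇀ h` weakly in `L¹(X, ρ)`: the integrals against every bounded measurable function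
(i.e. every element of `L^∞(X, ρ)`) converge. -/
def WeakL1Tendsto {X : Type*} [MeasurableSpace X] (ρ : Measure X)
    (u : ℕ → X → ℝ) (h : X → ℝ) : Prop :=
  ∀ g : X → ℝ, Measurable g → (∃ C : ℝ, ∀ x, |g x| ≤ C) →
    Tendsto (fun n => ∫ x, u n x * g x ∂ρ) atTop (nhds (∫ x, h x * g x ∂ρ))

namespace WeakL1Aux

variable {X : Type*} [MeasurableSpace X] {ρ : Measure X} [IsFiniteMeasure ρ]

/-- The measure with density `ofReal ∘ w` evaluated on a measurable set, in real terms. -/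
lemma wd_eq {w : X → ℝ} (hw : Integrable w ρ) (hpos : ∀ x, 0 ≤ w x) {A : Set X}
    (hA : MeasurableSet A) :
    ρ.withDensity (fun x => ENNReal.ofReal (w x)) A = ENNReal.ofReal (∫ x in A, w x ∂ρ) := by
  rw [withDensity_apply _ hA,
    ← ofReal_integral_eq_lintegral_ofReal hw.integrableOn (ae_of_all _ hpos)]

/-- Absolute continuity of the integral of a single integrable nonnegative function. -/
lemma abscont {w : X → ℝ} (hw : Integrable w ρ) (hpos : ∀ x, 0 ≤ w x) {ε : ℝ} (hε : 0 < ε) :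
    ∃ δ : ℝ, 0 < δ ∧ ∀ B, MeasurableSet B → ρ B < ENNReal.ofReal δ →
      ∫ x in B, w x ∂ρ ≤ ε := by
  have hne : ∫⁻ x, ENNReal.ofReal (w x) ∂ρ ≠ ∞ := by
    rw [← ofReal_integral_eq_lintegral_ofReal hw (ae_of_all _ hpos)]
    exact ENNReal.ofReal_ne_top
  obtain ⟨δ, hδ0, hδ⟩ := exists_pos_setLIntegral_lt_of_measure_lt hne
    (ε := ENNReal.ofReal ε) (by simp [hε, ENNReal.ofReal_pos.2 hε, (ENNReal.ofReal_pos.2 hε).ne'])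
  refine ⟨(min δ 1).toReal, ?_, ?_⟩
  · refine ENNReal.toReal_pos ?_ ?_
    · simp only [ne_eq, min_eq_iff]
      intro hmin
      rcases hmin with ⟨h1, _⟩ | ⟨h1, _⟩ <;> simp_all [hδ0.ne']
    · exact (lt_of_le_of_lt (min_le_right _ _) (by norm_num)).ne
  · intro B hB hBlt
    rw [ENNReal.ofReal_toReal (lt_of_le_of_lt (min_le_right _ _) (by norm_num)).ne] at hBlt
    have h1 : ∫⁻ x in B, ENNReal.ofReal (w x) ∂ρ < ENNReal.ofReal ε :=
      hδ _ (hBlt.trans_le (min_le_left _ _))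
    rw [← ofReal_integral_eq_lintegral_ofReal hw.integrableOn (ae_of_all _ hpos)] at h1
    have h2 : (ENNReal.ofReal (∫ x in B, w x ∂ρ)).toReal ≤ (ENNReal.ofReal ε).toReal :=
      ENNReal.toReal_mono ENNReal.ofReal_ne_top h1.le
    rwa [ENNReal.toReal_ofReal (setIntegral_nonneg hB fun x _ => hpos x),
      ENNReal.toReal_ofReal hε.le] at h2

/-- The set of indicator functions inside `L¹(ρ)`. -/
def indSet (ρ : Measure X) : Set (Lp ℝ 1 ρ) :=
  {f | ∃ A : Set X, MeasurableSet A ∧ ⇑f =ᵐ[ρ] A.indicator 1}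

lemma zero_mem_indSet : (0 : Lp ℝ 1 ρ) ∈ indSet ρ :=
  ⟨∅, MeasurableSet.empty, by filter_upwards [Lp.coeFn_zero ℝ 1 ρ] with y hy; simpa using hy⟩

lemma isClosed_indSet : IsClosed (indSet ρ) := by
  refine IsSeqClosed.isClosed ?_
  intro x p hx hlim
  have h1 : Tendsto (fun n => eLpNorm (⇑(x n) - ⇑p) 1 ρ) atTop (𝓝 0) :=
    (Lp.tendsto_Lp_iff_tendsto_eLpNorm' x p).1 hlim
  have h2 : TendstoInMeasure ρ (fun n => ⇑(x n)) atTop ⇑p :=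
    tendstoInMeasure_of_tendsto_eLpNorm one_ne_zero (fun n => Lp.aestronglyMeasurable _)
      (Lp.aestronglyMeasurable _) h1
  obtain ⟨ns, _hns, htae⟩ := h2.exists_seq_tendsto_ae
  have hvals : ∀ᵐ y ∂ρ, ∀ k, (x (ns k)) y = 0 ∨ (x (ns k)) y = 1 := by
    rw [ae_all_iff]
    intro k
    obtain ⟨A, hA, hrep⟩ := hx (ns k)
    filter_upwards [hrep] with y hy
    by_cases hyA : y ∈ A
    · right; simp [hy, indicator_of_mem hyA]
    · left; simp [hy, indicator_of_notMem hyA]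
  have hmem : ∀ᵐ y ∂ρ, p y = 0 ∨ p y = 1 := by
    filter_upwards [hvals, htae] with y hy hty
    have hclosed : IsClosed ({0, 1} : Set ℝ) := ((Set.finite_singleton (1:ℝ)).insert 0).isClosed
    have : p y ∈ ({0, 1} : Set ℝ) :=
      hclosed.mem_of_tendsto hty (Eventually.of_forall fun k => by
        rcases hy k with h | h <;> simp [h])
    simpa using this
  set q := (Lp.aestronglyMeasurable p).mk ⇑p with hq
  have hpq : ⇑p =ᵐ[ρ] q := (Lp.aestronglyMeasurable p).ae_eq_mk
  have hqmeas : Measurable q := (Lp.aestronglyMeasurable p).stronglyMeasurable_mk.measurable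
  refine ⟨q ⁻¹' {1}, hqmeas (measurableSet_singleton _), ?_⟩
  filter_upwards [hmem, hpq] with y hy hyq
  rcases hy with h0 | h1
  · have : q y = 0 := by rw [← hyq]; exact h0
    rw [hyq, indicator_of_notMem (by simp [this])]
    simpa [this] using hyq.symm.trans h0
  · have : q y = 1 := by rw [← hyq]; exact h1
    rw [hyq, indicator_of_mem (by simp [this])]
    simpa [this]

lemma dist_indSet {f g : Lp ℝ 1 ρ} {A B : Set X} (hA : MeasurableSet A) (hB : MeasurableSet B)
    (hf : ⇑f =ᵐ[ρ] A.indicator 1) (hg : ⇑g =ᵐ[ρ] B.indicator 1) :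
    dist f g = (ρ ((A \ B) ∪ (B \ A))).toReal := by
  rw [Lp.dist_def]
  congr 1
  have hae : (⇑f - ⇑g : X → ℝ) =ᵐ[ρ] fun y => A.indicator 1 y - B.indicator 1 y := hf.sub hg
  rw [eLpNorm_congr_ae hae, eLpNorm_one_eq_lintegral_enorm]
  have hpt : ∀ y, ‖A.indicator (1 : X → ℝ) y - B.indicator 1 y‖ₑ
      = ((A \ B) ∪ (B \ A)).indicator (fun _ => (1 : ℝ≥0∞)) y := by
    intro y
    by_cases hyA : y ∈ A <;> by_cases hyB : y ∈ B <;>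
      simp [Set.indicator, hyA, hyB]
  rw [lintegral_congr hpt, lintegral_indicator ((hA.diff hB).union (hB.diff hA)),
    setLIntegral_one]


variable {u : ℕ → X → ℝ}

lemma integral_mul_ind {w : X → ℝ} {f : Lp ℝ 1 ρ} {A : Set X}
    (hA : MeasurableSet A) (hf : ⇑f =ᵐ[ρ] A.indicator 1) :
    ∫ x, w x * f x ∂ρ = ∫ x in A, w x ∂ρ := by
  rw [← integral_indicator hA]
  refine integral_congr_ae ?_
  filter_upwards [hf] with x hx
  rw [hx]
  by_cases hxA : x ∈ A <;> simp [Set.indicator, hxA]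

lemma indicatorConstLp_rep {A : Set X} (hA : MeasurableSet A) :
    ⇑(indicatorConstLp 1 hA (measure_ne_top ρ A) (1:ℝ)) =ᵐ[ρ] A.indicator 1 := by
  filter_upwards [indicatorConstLp_coeFn (p := 1) (hs := hA) (hμs := measure_ne_top ρ A)
    (c := (1:ℝ))] with y hy
  exact hy

lemma indicatorConstLp_mem {A : Set X} (hA : MeasurableSet A) :
    indicatorConstLp 1 hA (measure_ne_top ρ A) (1:ℝ) ∈ indSet ρ :=
  ⟨A, hA, indicatorConstLp_rep hA⟩

lemma continuous_Fn {w : X → ℝ} (hw : Integrable w ρ) (hpos : ∀ x, 0 ≤ w x) :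
    Continuous (fun f : ↥(indSet ρ) => ∫ x, w x * ((f : Lp ℝ 1 ρ) : X → ℝ) x ∂ρ) := by
  rw [Metric.continuous_iff]
  rintro ⟨g₀, A₀, hA₀, hrep₀⟩ ε hε
  obtain ⟨δ, hδ0, hδ⟩ := abscont hw hpos (by positivity : (0:ℝ) < ε/3)
  refine ⟨δ, hδ0, ?_⟩
  rintro ⟨g, A, hA, hrep⟩ hdist
  rw [Subtype.dist_eq] at hdist
  simp only
  rw [Real.dist_eq, integral_mul_ind hA hrep, integral_mul_ind hA₀ hrep₀]
  have hD : ρ ((A \ A₀) ∪ (A₀ \ A)) < ENNReal.ofReal δ := by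
    rw [dist_indSet hA hA₀ hrep hrep₀] at hdist
    rwa [ENNReal.lt_ofReal_iff_toReal_lt (measure_ne_top ρ _)]
  have h1 : ∫ x in A \ A₀, w x ∂ρ ≤ ε/3 :=
    hδ _ (hA.diff hA₀) (lt_of_le_of_lt (measure_mono subset_union_left) hD)
  have h2 : ∫ x in A₀ \ A, w x ∂ρ ≤ ε/3 :=
    hδ _ (hA₀.diff hA) (lt_of_le_of_lt (measure_mono subset_union_right) hD)
  have h1' : 0 ≤ ∫ x in A \ A₀, w x ∂ρ := setIntegral_nonneg (hA.diff hA₀) fun x _ => hpos x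
  have h2' : 0 ≤ ∫ x in A₀ \ A, w x ∂ρ := setIntegral_nonneg (hA₀.diff hA) fun x _ => hpos x
  have e1 : ∫ x in A, w x ∂ρ = ∫ x in A ∩ A₀, w x ∂ρ + ∫ x in A \ A₀, w x ∂ρ := by
    have := setIntegral_union (f := w) (μ := ρ) (s := A ∩ A₀) (t := A \ A₀)
      (disjoint_sdiff_right.mono_left inter_subset_right) (hA.diff hA₀)
      hw.integrableOn hw.integrableOn
    rwa [Set.inter_union_diff] at this
  have e2 : ∫ x in A₀, w x ∂ρ = ∫ x in A ∩ A₀, w x ∂ρ + ∫ x in A₀ \ A, w x ∂ρ := by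
    have := setIntegral_union (f := w) (μ := ρ) (s := A₀ ∩ A) (t := A₀ \ A)
      (disjoint_sdiff_right.mono_left inter_subset_right) (hA₀.diff hA)
      hw.integrableOn hw.integrableOn
    rwa [Set.inter_union_diff, Set.inter_comm A₀ A] at this
  rw [e1, e2, show ∀ a b c : ℝ, (a + b) - (a + c) = b - c from fun a b c => by ring,
    abs_sub_lt_iff]
  constructor <;> linarith

lemma equi (hu : ∀ n, Integrable (u n) ρ) (hupos : ∀ n x, 0 ≤ u n x)
    (hconv : ∀ A : Set X, MeasurableSet A →
      ∃ c : ℝ, Tendsto (fun n => ∫ x in A, u n x ∂ρ) atTop (𝓝 c))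
    {ε : ℝ} (hε : 0 < ε) :
    ∃ δ : ℝ, 0 < δ ∧ ∀ n, ∀ B, MeasurableSet B → ρ B < ENNReal.ofReal δ →
      ∫ x in B, u n x ∂ρ ≤ ε := by
  haveI : CompleteSpace ↥(indSet ρ) := (isClosed_indSet (ρ := ρ)).completeSpace_coe
  haveI : Nonempty ↥(indSet ρ) := ⟨⟨0, zero_mem_indSet⟩⟩
  set F : ℕ → ↥(indSet ρ) → ℝ :=
    fun n f => ∫ x, u n x * ((f : Lp ℝ 1 ρ) : X → ℝ) x ∂ρ with hF
  set E : ℕ → Set ↥(indSet ρ) :=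
    fun N => {f | ∀ m, N ≤ m → ∀ n, N ≤ n → |F m f - F n f| ≤ ε/4} with hE
  have hclosed : ∀ N, IsClosed (E N) := by
    intro N
    have : E N = ⋂ m, ⋂ (_ : N ≤ m), ⋂ n, ⋂ (_ : N ≤ n), {f | |F m f - F n f| ≤ ε/4} := by
      ext f; simp [hE]
    rw [this]
    refine isClosed_iInter fun m => isClosed_iInter fun _ => isClosed_iInter fun n =>
      isClosed_iInter fun _ => ?_
    exact isClosed_le
      (((continuous_Fn (hu m) (hupos m)).sub (continuous_Fn (hu n) (hupos n))).abs)
      continuous_const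
  have hcover : ⋃ N, E N = univ := by
    rw [eq_univ_iff_forall]
    rintro ⟨g, A, hA, hrep⟩
    obtain ⟨c, hc⟩ := hconv A hA
    rw [Metric.tendsto_atTop] at hc
    obtain ⟨N, hN⟩ := hc (ε/8) (by positivity)
    refine mem_iUnion.2 ⟨N, ?_⟩
    intro m hm n hn
    have em : F m ⟨g, ⟨A, hA, hrep⟩⟩ = ∫ x in A, u m x ∂ρ := integral_mul_ind hA hrep
    have en : F n ⟨g, ⟨A, hA, hrep⟩⟩ = ∫ x in A, u n x ∂ρ := integral_mul_ind hA hrep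
    have dm := hN m hm
    have dn := hN n hn
    rw [Real.dist_eq] at dm dn
    rw [em, en, show (∫ x in A, u m x ∂ρ) - ∫ x in A, u n x ∂ρ
      = ((∫ x in A, u m x ∂ρ) - c) - ((∫ x in A, u n x ∂ρ) - c) from by ring]
    calc |((∫ x in A, u m x ∂ρ) - c) - ((∫ x in A, u n x ∂ρ) - c)|
        ≤ |(∫ x in A, u m x ∂ρ) - c| + |(∫ x in A, u n x ∂ρ) - c| := abs_sub _ _
      _ ≤ ε/4 := by linarith
  obtain ⟨N, hNne⟩ := nonempty_interior_of_iUnion_of_closed hclosed hcover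
  obtain ⟨f₀, hf₀⟩ := hNne
  rw [mem_interior_iff_mem_nhds, Metric.mem_nhds_iff] at hf₀
  obtain ⟨r, hr, hball⟩ := hf₀
  obtain ⟨A₀, hA₀, hrep₀⟩ := f₀.2
  have hump : ∀ B, MeasurableSet B → ρ B < ENNReal.ofReal r →
      ∀ m n, N ≤ m → N ≤ n →
        |(∫ x in B, u m x ∂ρ) - ∫ x in B, u n x ∂ρ| ≤ ε/2 := by
    intro B hB hBr m n hm hn
    have mem1 : indicatorConstLp 1 (hA₀.union hB) (measure_ne_top ρ _) (1:ℝ) ∈ indSet ρ :=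
      indicatorConstLp_mem (hA₀.union hB)
    have mem2 : indicatorConstLp 1 (hA₀.diff hB) (measure_ne_top ρ _) (1:ℝ) ∈ indSet ρ :=
      indicatorConstLp_mem (hA₀.diff hB)
    have hBtoReal : (ρ B).toReal < r :=
      (ENNReal.lt_ofReal_iff_toReal_lt (measure_ne_top ρ _)).1 hBr
    have hd1 : (⟨_, mem1⟩ : ↥(indSet ρ)) ∈ Metric.ball f₀ r := by
      rw [Metric.mem_ball, Subtype.dist_eq]
      show dist (indicatorConstLp 1 (hA₀.union hB) (measure_ne_top ρ _) (1:ℝ))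
        (f₀ : Lp ℝ 1 ρ) < r
      have heq := dist_indSet
        (f := indicatorConstLp 1 (hA₀.union hB) (measure_ne_top ρ _) (1:ℝ))
        (g := (f₀ : Lp ℝ 1 ρ)) (hA₀.union hB) hA₀ (indicatorConstLp_rep (hA₀.union hB)) hrep₀
      rw [heq]
      have hsub : (((A₀ ∪ B) \ A₀) ∪ (A₀ \ (A₀ ∪ B))) ⊆ B := by
        intro x hx
        simp only [Set.mem_union, Set.mem_diff] at hx ⊢
        tauto
      exact lt_of_le_of_lt
        (ENNReal.toReal_mono (measure_ne_top ρ _) (measure_mono hsub)) hBtoReal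
    have hd2 : (⟨_, mem2⟩ : ↥(indSet ρ)) ∈ Metric.ball f₀ r := by
      rw [Metric.mem_ball, Subtype.dist_eq]
      show dist (indicatorConstLp 1 (hA₀.diff hB) (measure_ne_top ρ _) (1:ℝ))
        (f₀ : Lp ℝ 1 ρ) < r
      have heq := dist_indSet
        (f := indicatorConstLp 1 (hA₀.diff hB) (measure_ne_top ρ _) (1:ℝ))
        (g := (f₀ : Lp ℝ 1 ρ)) (hA₀.diff hB) hA₀ (indicatorConstLp_rep (hA₀.diff hB)) hrep₀
      rw [heq]
      have hsub : (((A₀ \ B) \ A₀) ∪ (A₀ \ (A₀ \ B))) ⊆ B := by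
        intro x hx
        simp only [Set.mem_union, Set.mem_diff, not_and, not_not] at hx ⊢
        tauto
      exact lt_of_le_of_lt
        (ENNReal.toReal_mono (measure_ne_top ρ _) (measure_mono hsub)) hBtoReal
    have hEN1 := hball hd1 m hm n hn
    have hEN2 := hball hd2 m hm n hn
    have e1m : F m ⟨_, mem1⟩ = ∫ x in A₀ ∪ B, u m x ∂ρ :=
      integral_mul_ind (hA₀.union hB) (indicatorConstLp_rep (hA₀.union hB))
    have e1n : F n ⟨_, mem1⟩ = ∫ x in A₀ ∪ B, u n x ∂ρ :=
      integral_mul_ind (hA₀.union hB) (indicatorConstLp_rep (hA₀.union hB))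
    have e2m : F m ⟨_, mem2⟩ = ∫ x in A₀ \ B, u m x ∂ρ :=
      integral_mul_ind (hA₀.diff hB) (indicatorConstLp_rep (hA₀.diff hB))
    have e2n : F n ⟨_, mem2⟩ = ∫ x in A₀ \ B, u n x ∂ρ :=
      integral_mul_ind (hA₀.diff hB) (indicatorConstLp_rep (hA₀.diff hB))
    rw [e1m, e1n] at hEN1
    rw [e2m, e2n] at hEN2
    have hdecomp : ∀ k, ∫ x in A₀ ∪ B, u k x ∂ρ
        = (∫ x in A₀ \ B, u k x ∂ρ) + ∫ x in B, u k x ∂ρ := by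
      intro k
      have := setIntegral_union (f := u k) (μ := ρ) (s := A₀ \ B) (t := B)
        disjoint_sdiff_left hB (hu k).integrableOn (hu k).integrableOn
      rwa [Set.diff_union_self] at this
    rw [abs_le] at hEN1 hEN2 ⊢
    have d1 := hdecomp m
    have d2 := hdecomp n
    constructor <;> [linarith [hEN1.1, hEN2.2]; linarith [hEN1.2, hEN2.1]]
  choose δs hδs0 hδs using fun k => abscont (hu k) (hupos k) (by positivity : (0:ℝ) < ε/2)
  have hne : (Finset.range (N+1)).Nonempty := ⟨0, by simp⟩
  set δ := min r ((Finset.range (N+1)).inf' hne δs) with hδdef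
  have hδ0 : 0 < δ := lt_min hr (by rw [Finset.lt_inf'_iff]; intro i _; exact hδs0 i)
  refine ⟨δ, hδ0, ?_⟩
  intro n B hB hBδ
  have hBr : ρ B < ENNReal.ofReal r := hBδ.trans_le (ENNReal.ofReal_le_ofReal (min_le_left _ _))
  by_cases hn : n ≤ N
  · have hle : δ ≤ δs n := (min_le_right _ _).trans
      (Finset.inf'_le _ (by simp [Finset.mem_range]; omega))
    exact (hδs n B hB (hBδ.trans_le (ENNReal.ofReal_le_ofReal hle))).trans (by linarith)
  · push_neg at hn
    have h1 := hump B hB hBr n N hn.le le_rfl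
    have hleN : δ ≤ δs N := (min_le_right _ _).trans (Finset.inf'_le _ (by simp))
    have h2 := hδs N B hB (hBδ.trans_le (ENNReal.ofReal_le_ofReal hleN))
    have h3 : (∫ x in B, u n x ∂ρ) - ∫ x in B, u N x ∂ρ ≤ ε/2 := (le_abs_self _).trans h1
    linarith


lemma integral_mul_indicator (w : X → ℝ) {B : Set X} (hB : MeasurableSet B) :
    ∫ x, w x * B.indicator (fun _ => (1:ℝ)) x ∂ρ = ∫ x in B, w x ∂ρ := by
  rw [← integral_indicator hB]
  congr 1
  funext x
  by_cases hx : x ∈ B <;> simp [hx]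

lemma integrable_mul_bdd {w φ : X → ℝ} (hw : Integrable w ρ) (hφ : Measurable φ)
    {C : ℝ} (hC : ∀ x, |φ x| ≤ C) : Integrable (fun x => w x * φ x) ρ := by
  have h1 : Integrable (fun x => φ x * w x) ρ :=
    hw.bdd_mul hφ.aestronglyMeasurable (ae_of_all _ fun x => by
      simpa [Real.norm_eq_abs] using hC x)
  exact h1.congr (ae_of_all _ fun x => mul_comm _ _)

lemma integral_mul_close {w g φ : X → ℝ}
    (hw : Integrable w ρ)
    (hwg : Integrable (fun x => w x * g x) ρ) (hwφ : Integrable (fun x => w x * φ x) ρ)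
    {ε' : ℝ} (hε' : 0 ≤ ε') (hcl : ∀ x, |g x - φ x| ≤ ε') :
    |(∫ x, w x * g x ∂ρ) - ∫ x, w x * φ x ∂ρ| ≤ ε' * ∫ x, |w x| ∂ρ := by
  rw [← integral_sub hwg hwφ]
  calc |∫ x, (w x * g x - w x * φ x) ∂ρ|
      ≤ ∫ x, |w x * g x - w x * φ x| ∂ρ := by
        simpa [Real.norm_eq_abs] using
          norm_integral_le_integral_norm (μ := ρ) (fun x => w x * g x - w x * φ x)
    _ ≤ ∫ x, ε' * |w x| ∂ρ := by
        refine integral_mono (hwg.sub hwφ).abs (hw.abs.const_mul ε') fun x => ?_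
        rw [show w x * g x - w x * φ x = w x * (g x - φ x) from by ring, abs_mul, mul_comm]
        exact mul_le_mul_of_nonneg_right (hcl x) (abs_nonneg _)
    _ = ε' * ∫ x, |w x| ∂ρ := integral_const_mul _ _

lemma tendsto_integral_mul_finrange {h : X → ℝ} (hu : ∀ n, Integrable (u n) ρ)
    (hh : Integrable h ρ)
    (hset : ∀ A : Set X, MeasurableSet A →
      Tendsto (fun n => ∫ x in A, u n x ∂ρ) atTop (𝓝 (∫ x in A, h x ∂ρ)))
    {φ : X → ℝ} (hφ : Measurable φ) (hfin : (Set.range φ).Finite) :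
    Tendsto (fun n => ∫ x, u n x * φ x ∂ρ) atTop (𝓝 (∫ x, h x * φ x ∂ρ)) := by
  classical
  set R := hfin.toFinset with hR
  have hmemR : ∀ x, φ x ∈ R := fun x => hfin.mem_toFinset.2 (mem_range_self x)
  have hrepr : ∀ (w : X → ℝ) (x : X), w x * φ x
      = ∑ c ∈ R, (φ ⁻¹' {c}).indicator (fun y => w y * c) x := by
    intro w x
    rw [Finset.sum_eq_single_of_mem (φ x) (hmemR x)
      (fun c _ hne => indicator_of_notMem (fun hx => hne (Eq.symm (by simpa using hx))) _),
      indicator_of_mem (by simp : x ∈ φ ⁻¹' {φ x})]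
  have hint : ∀ (w : X → ℝ), Integrable w ρ → ∀ c : ℝ,
      Integrable ((φ ⁻¹' {c}).indicator (fun y => w y * c)) ρ := by
    intro w hw c
    rw [integrable_indicator_iff (hφ (measurableSet_singleton c))]
    exact (hw.mul_const c).integrableOn
  have key : ∀ (w : X → ℝ), Integrable w ρ →
      ∫ x, w x * φ x ∂ρ = ∑ c ∈ R, (∫ x in φ ⁻¹' {c}, w x ∂ρ) * c := by
    intro w hw
    rw [integral_congr_ae (ae_of_all _ (hrepr w)),
      integral_finset_sum _ (fun c _ => hint w hw c)]
    refine Finset.sum_congr rfl fun c _ => ?_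
    rw [integral_indicator (hφ (measurableSet_singleton c)), integral_mul_const]
  have hkey : ∀ n, ∫ x, u n x * φ x ∂ρ = ∑ c ∈ R, (∫ x in φ ⁻¹' {c}, u n x ∂ρ) * c :=
    fun n => key (u n) (hu n)
  rw [key h hh]
  refine Tendsto.congr (fun n => (hkey n).symm) ?_
  exact tendsto_finset_sum _ fun c _ =>
    (hset (φ ⁻¹' {c}) (hφ (measurableSet_singleton c))).mul_const c

lemma weak_of_setwise (hu : ∀ n, Integrable (u n) ρ) (hupos : ∀ n x, 0 ≤ u n x)
    {h : X → ℝ} (hh : Integrable h ρ)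
    (hset : ∀ A : Set X, MeasurableSet A →
      Tendsto (fun n => ∫ x in A, u n x ∂ρ) atTop (𝓝 (∫ x in A, h x ∂ρ))) :
    WeakL1Tendsto ρ u h := by
  classical
  obtain ⟨M₀, hM₀⟩ := (hset univ MeasurableSet.univ).bddAbove_range
  set M : ℝ := max 1 (max M₀ (∫ x, |h x| ∂ρ)) with hM
  have hM1 : (1:ℝ) ≤ M := le_max_left _ _
  have hMu : ∀ n, ∫ x, |u n x| ∂ρ ≤ M := by
    intro n
    have e : ∫ x, |u n x| ∂ρ = ∫ x in univ, u n x ∂ρ := by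
      rw [setIntegral_univ]
      exact integral_congr_ae (ae_of_all _ fun x => abs_of_nonneg (hupos n x))
    rw [e]
    exact le_trans (hM₀ (mem_range_self n)) ((le_max_left _ _).trans (le_max_right _ _))
  have hMh : ∫ x, |h x| ∂ρ ≤ M := (le_max_right _ _).trans (le_max_right _ _)
  intro g hg hgbd
  obtain ⟨C, hC⟩ := hgbd
  rw [Metric.tendsto_atTop]
  intro ε hε
  set ε' : ℝ := ε / (4 * M) with hε'def
  have hε'pos : 0 < ε' := by
    apply div_pos hε; nlinarith
  -- finite-range approximation of g
  set φ : X → ℝ := fun x => (⌊g x / ε'⌋ : ℝ) * ε' with hφdef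
  have hφmeas : Measurable φ :=
    (measurable_from_top.comp ((hg.div_const ε').floor)).mul measurable_const
  have hφclose : ∀ x, |g x - φ x| ≤ ε' := by
    intro x
    have h1 : (⌊g x / ε'⌋ : ℝ) ≤ g x / ε' := Int.floor_le _
    have h2 : g x / ε' - 1 < (⌊g x / ε'⌋ : ℝ) := Int.sub_one_lt_floor _
    have hφx : φ x = (⌊g x / ε'⌋ : ℝ) * ε' := rfl
    rw [abs_le, hφx]
    constructor
    · nlinarith [mul_le_mul_of_nonneg_right h1 hε'pos.le,
        (div_mul_cancel₀ (g x) hε'pos.ne' : g x / ε' * ε' = g x)]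
    · nlinarith [mul_le_mul_of_nonneg_right h2.le hε'pos.le,
        (div_mul_cancel₀ (g x) hε'pos.ne' : g x / ε' * ε' = g x)]
  have hφfin : (Set.range φ).Finite := by
    have hsub : Set.range φ ⊆ (fun z : ℤ => (z:ℝ) * ε') '' (Set.Icc ⌊-C / ε'⌋ ⌊C / ε'⌋) := by
      rintro y ⟨x, rfl⟩
      refine ⟨⌊g x / ε'⌋, ⟨?_, ?_⟩, rfl⟩
      · exact Int.floor_le_floor ((div_le_div_iff_of_pos_right hε'pos).2 ((abs_le.1 (hC x)).1))
      · exact Int.floor_le_floor ((div_le_div_iff_of_pos_right hε'pos).2 (abs_le.1 (hC x)).2)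
    exact ((Set.finite_Icc _ _).image _).subset hsub
  have hφbd : ∀ x, |φ x| ≤ C + ε' := by
    intro x
    have := hφclose x
    have := hC x
    rw [abs_le] at *
    constructor <;> [linarith [this.1]; linarith]
  -- main estimates
  have htend := tendsto_integral_mul_finrange hu hh hset hφmeas hφfin
  rw [Metric.tendsto_atTop] at htend
  obtain ⟨N, hN⟩ := htend (ε/2) (by positivity)
  refine ⟨N, fun n hn => ?_⟩
  have hun_g := integrable_mul_bdd (hu n) hg hC
  have hun_φ := integrable_mul_bdd (hu n) hφmeas hφbd
  have hh_g := integrable_mul_bdd hh hg hC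
  have hh_φ := integrable_mul_bdd hh hφmeas hφbd
  have e1 : |(∫ x, u n x * g x ∂ρ) - ∫ x, u n x * φ x ∂ρ| ≤ ε' * M := by
    refine le_trans (integral_mul_close (hu n) hun_g hun_φ hε'pos.le hφclose) ?_
    exact mul_le_mul_of_nonneg_left (hMu n) hε'pos.le
  have e2 : |(∫ x, h x * g x ∂ρ) - ∫ x, h x * φ x ∂ρ| ≤ ε' * M := by
    refine le_trans (integral_mul_close hh hh_g hh_φ hε'pos.le hφclose) ?_
    exact mul_le_mul_of_nonneg_left hMh hε'pos.le
  have e3 : |(∫ x, u n x * φ x ∂ρ) - ∫ x, h x * φ x ∂ρ| < ε/2 := by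
    have := hN n hn; rwa [Real.dist_eq] at this
  have hε'M : ε' * M = ε/4 := by
    field_simp [hε'def]
    rw [hε'def, div_mul_eq_mul_div, div_mul_eq_mul_div, div_eq_iff (ne_of_gt (by linarith))]
    ring
  rw [Real.dist_eq]
  calc |(∫ x, u n x * g x ∂ρ) - ∫ x, h x * g x ∂ρ|
      ≤ |(∫ x, u n x * g x ∂ρ) - ∫ x, u n x * φ x ∂ρ|
        + |(∫ x, u n x * φ x ∂ρ) - ∫ x, h x * φ x ∂ρ|
        + |(∫ x, h x * φ x ∂ρ) - ∫ x, h x * g x ∂ρ| := by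
        rw [show (∫ x, u n x * g x ∂ρ) - ∫ x, h x * g x ∂ρ
          = ((∫ x, u n x * g x ∂ρ) - ∫ x, u n x * φ x ∂ρ)
            + ((∫ x, u n x * φ x ∂ρ) - ∫ x, h x * φ x ∂ρ)
            + ((∫ x, h x * φ x ∂ρ) - ∫ x, h x * g x ∂ρ) from by ring]
        exact (abs_add_le _ _).trans (by gcongr; exact abs_add_le _ _)
    _ < ε := by
        rw [abs_sub_comm (∫ x, h x * φ x ∂ρ)] at *
        linarith [e1, e2, e3]


lemma backward (hu : ∀ n, Integrable (u n) ρ) (hupos : ∀ n x, 0 ≤ u n x)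
    (H : ∀ A : Set X, MeasurableSet A → ∃ c : ℝ≥0∞, c < ⊤ ∧
      Tendsto (fun n => ρ.withDensity (fun x => ENNReal.ofReal (u n x)) A) atTop (𝓝 c)) :
    ∃ h : X → ℝ, Integrable h ρ ∧ WeakL1Tendsto ρ u h := by
  classical
  set ρn : ℕ → Set X → ℝ≥0∞ :=
    fun n A => ρ.withDensity (fun x => ENNReal.ofReal (u n x)) A with hρn
  have hρn_eq : ∀ n (A : Set X), MeasurableSet A →
      ρn n A = ENNReal.ofReal (∫ x in A, u n x ∂ρ) :=
    fun n A hA => wd_eq (hu n) (hupos n) hA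
  have hconv : ∀ A : Set X, MeasurableSet A →
      ∃ c : ℝ, Tendsto (fun n => ∫ x in A, u n x ∂ρ) atTop (𝓝 c) := by
    intro A hA
    obtain ⟨c, hc, htend⟩ := H A hA
    refine ⟨c.toReal, ?_⟩
    have h1 : Tendsto (fun n => (ρn n A).toReal) atTop (𝓝 c.toReal) :=
      (ENNReal.tendsto_toReal hc.ne).comp htend
    refine h1.congr fun n => ?_
    rw [hρn_eq n A hA,
      ENNReal.toReal_ofReal (setIntegral_nonneg hA fun x _ => hupos n x)]
  set L : Set X → ℝ≥0∞ := fun A => atTop.liminf (fun n => ρn n A) with hL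
  have hLtend : ∀ A : Set X, MeasurableSet A →
      Tendsto (fun n => ρn n A) atTop (𝓝 (L A)) := by
    intro A hA
    obtain ⟨c, _, htend⟩ := H A hA
    rw [show L A = c from htend.liminf_eq]
    exact htend
  have hLlt : ∀ A : Set X, MeasurableSet A → L A < ⊤ := by
    intro A hA
    obtain ⟨c, hc, htend⟩ := H A hA
    rw [show L A = c from htend.liminf_eq]
    exact hc
  have hadd : ∀ (f : ℕ → Set X), (∀ i, MeasurableSet (f i)) → Pairwise (Function.onFun Disjoint f) →
      L (⋃ i, f i) = ∑' i, L (f i) := by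
    intro f hf hdisj
    have hUm : MeasurableSet (⋃ i, f i) := MeasurableSet.iUnion hf
    -- partial sums bound
    have hpartial : ∀ k : ℕ,
        ∑ i ∈ Finset.range k, L (f i) = L (⋃ i ∈ Finset.range k, f i) := by
      intro k
      have hmeas : MeasurableSet (⋃ i ∈ Finset.range k, f i) :=
        (Finset.range k).measurableSet_biUnion fun i _ => hf i
      refine tendsto_nhds_unique ?_ (hLtend _ hmeas)
      have heq : ∀ n, ∑ i ∈ Finset.range k, ρn n (f i) = ρn n (⋃ i ∈ Finset.range k, f i) :=
        fun n => (measure_biUnion_finset (hdisj.set_pairwise _) fun i _ => hf i).symm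
      exact Tendsto.congr heq (tendsto_finset_sum _ fun i _ => hLtend (f i) (hf i))
    have hmono : ∀ k : ℕ, ∑ i ∈ Finset.range k, L (f i) ≤ L (⋃ i, f i) := by
      intro k
      rw [hpartial k]
      refine le_of_tendsto_of_tendsto'
        (hLtend _ ((Finset.range k).measurableSet_biUnion fun i _ => hf i))
        (hLtend _ hUm) fun n => measure_mono (iUnion₂_subset fun i _ => subset_iUnion f i)
    have hge : ∑' i, L (f i) ≤ L (⋃ i, f i) := by
      rw [ENNReal.tsum_eq_iSup_nat]
      exact iSup_le hmono
    have hsum_ne : ∑' i, L (f i) ≠ ⊤ := (lt_of_le_of_lt hge (hLlt _ hUm)).ne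
    refine le_antisymm ?_ hge
    refine ENNReal.le_of_forall_pos_le_add fun ε hε hlt => ?_
    obtain ⟨δ, hδ0, hδ⟩ := equi hu hupos hconv (show (0:ℝ) < ε from hε)
    -- tail sets
    have htail_meas : ∀ k : ℕ, MeasurableSet (⋃ i, f (i + k)) :=
      fun k => MeasurableSet.iUnion fun i => hf (i + k)
    have hsumρ_ne : ∑' i, ρ (f i) ≠ ⊤ := by
      rw [← measure_iUnion hdisj hf]
      exact measure_ne_top ρ _
    have htail0 : Tendsto (fun k => ρ (⋃ i, f (i + k))) atTop (𝓝 0) := by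
      refine tendsto_of_tendsto_of_tendsto_of_le_of_le tendsto_const_nhds
        (ENNReal.tendsto_sum_nat_add (fun i => ρ (f i)) hsumρ_ne)
        (fun k => zero_le) (fun k => measure_iUnion_le _)
    obtain ⟨k, hk⟩ := (htail0.eventually_lt_const
      (show (0:ℝ≥0∞) < ENNReal.ofReal δ from ENNReal.ofReal_pos.2 hδ0)).exists
    have hLtail : L (⋃ i, f (i + k)) ≤ ENNReal.ofReal ε := by
      refine le_of_tendsto (hLtend _ (htail_meas k)) (Eventually.of_forall fun n => ?_)
      rw [hρn_eq n _ (htail_meas k)]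
      exact ENNReal.ofReal_le_ofReal (hδ n _ (htail_meas k) hk)
    have hsplit : L (⋃ i, f i) ≤ L (⋃ i ∈ Finset.range k, f i) + L (⋃ i, f (i + k)) := by
      refine le_of_tendsto_of_tendsto' (hLtend _ hUm)
        ((hLtend _ ((Finset.range k).measurableSet_biUnion fun i _ => hf i)).add
          (hLtend _ (htail_meas k))) fun n => ?_
      refine le_trans (measure_mono ?_) (measure_union_le _ _)
      intro x hx
      obtain ⟨i, hi⟩ := mem_iUnion.1 hx
      by_cases hik : i < k
      · exact Or.inl (mem_biUnion (Finset.mem_range.2 hik) hi)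
      · push_neg at hik
        exact Or.inr (mem_iUnion.2 ⟨i - k, by rwa [Nat.sub_add_cancel hik]⟩)
    calc L (⋃ i, f i) ≤ L (⋃ i ∈ Finset.range k, f i) + L (⋃ i, f (i + k)) := hsplit
      _ ≤ (∑ i ∈ Finset.range k, L (f i)) + ENNReal.ofReal ε := by
          rw [← hpartial k]; exact add_le_add le_rfl hLtail
      _ ≤ (∑' i, L (f i)) + ε := by
          refine add_le_add (ENNReal.sum_le_tsum _) ?_
          rw [ENNReal.ofReal_coe_nnreal]
  set ν : Measure X := Measure.ofMeasurable (fun A _ => L A)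
    (by
      have h0 : (fun n => ρn n (∅ : Set X)) = fun _ => (0 : ℝ≥0∞) :=
        funext fun n => measure_empty
      simp only [hL, h0, liminf_const])
    (fun f hf hd => hadd f hf hd) with hνdef
  have hν : ∀ A : Set X, MeasurableSet A → ν A = L A :=
    fun A hA => Measure.ofMeasurable_apply A hA
  haveI : IsFiniteMeasure ν :=
    ⟨by rw [hν univ MeasurableSet.univ]; exact hLlt univ MeasurableSet.univ⟩
  have hac : ν ≪ ρ := by
    refine Measure.AbsolutelyContinuous.mk fun A hA hA0 => ?_
    rw [hν A hA]
    have hz : (fun n => ρn n A) = fun _ => (0 : ℝ≥0∞) := by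
      funext n
      simp [hρn, withDensity_apply _ hA, Measure.restrict_eq_zero.2 hA0]
    simp only [hL, hz, liminf_const]
  refine ⟨fun x => (ν.rnDeriv ρ x).toReal, Measure.integrable_toReal_rnDeriv, ?_⟩
  refine weak_of_setwise hu hupos Measure.integrable_toReal_rnDeriv ?_
  intro A hA
  have e : ∫ x in A, (ν.rnDeriv ρ x).toReal ∂ρ = (ν A).toReal :=
    Measure.setIntegral_toReal_rnDeriv hac A
  rw [e, hν A hA]
  have h1 : Tendsto (fun n => (ρn n A).toReal) atTop (𝓝 (L A).toReal) :=
    (ENNReal.tendsto_toReal (hLlt A hA).ne).comp (hLtend A hA)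
  refine h1.congr fun n => ?_
  rw [hρn_eq n A hA,
    ENNReal.toReal_ofReal (setIntegral_nonneg hA fun x _ => hupos n x)]

lemma forward (hu : ∀ n, Integrable (u n) ρ) (hupos : ∀ n x, 0 ≤ u n x)
    {h : X → ℝ} (hh : Integrable h ρ) (hw : WeakL1Tendsto ρ u h)
    {A : Set X} (hA : MeasurableSet A) :
    Tendsto (fun n => ρ.withDensity (fun x => ENNReal.ofReal (u n x)) A) atTop
      (𝓝 (ρ.withDensity (fun x => ENNReal.ofReal (h x)) A)) := by
  have hsetA : ∀ B : Set X, MeasurableSet B →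
      Tendsto (fun n => ∫ x in B, u n x ∂ρ) atTop (𝓝 (∫ x in B, h x ∂ρ)) := by
    intro B hB
    have hmeas : Measurable (B.indicator (fun _ => (1:ℝ))) := measurable_const.indicator hB
    have hbd : ∀ x, |B.indicator (fun _ => (1:ℝ)) x| ≤ 1 := by
      intro x; by_cases hx : x ∈ B <;> simp [hx]
    have h1 := hw _ hmeas ⟨1, hbd⟩
    rw [integral_mul_indicator h hB] at h1
    exact h1.congr fun n => integral_mul_indicator (u n) hB
  have hpos : 0 ≤ᵐ[ρ] h :=
    ae_nonneg_of_forall_setIntegral_nonneg hh fun s hs _ =>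
      ge_of_tendsto (hsetA s hs) (Eventually.of_forall fun n =>
        setIntegral_nonneg hs fun x _ => hupos n x)
  have e2 : ρ.withDensity (fun x => ENNReal.ofReal (h x)) A
      = ENNReal.ofReal (∫ x in A, h x ∂ρ) := by
    rw [withDensity_apply _ hA,
      ← ofReal_integral_eq_lintegral_ofReal hh.integrableOn (ae_restrict_of_ae hpos)]
  rw [e2]
  have h1 : Tendsto (fun n => ENNReal.ofReal (∫ x in A, u n x ∂ρ)) atTop
      (𝓝 (ENNReal.ofReal (∫ x in A, h x ∂ρ))) :=
    (ENNReal.continuous_ofReal.tendsto _).comp (hsetA A hA)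
  exact h1.congr fun n => (wd_eq (hu n) (hupos n) hA).symm

lemma wd_lt_top {h : X → ℝ} (hh : Integrable h ρ) {A : Set X} (hA : MeasurableSet A) :
    ρ.withDensity (fun x => ENNReal.ofReal (h x)) A < ⊤ := by
  rw [withDensity_apply _ hA]
  refine lt_of_le_of_lt (setLIntegral_le_lintegral _ _) ?_
  refine lt_of_le_of_lt (lintegral_mono fun x => Real.ofReal_le_enorm (h x)) ?_
  exact hh.2

end WeakL1Aux

/-- For a sequence of nonnegative `uₙ ∈ L¹(X, ρ)` on a compact metric space with finite Borel
measure `ρ`, and the measures `ρₙ = ρ.withDensity uₙ`: `(uₙ)` converges weakly in `L¹(X, ρ)`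
to some `h ∈ L¹(X, ρ)` if and only if for every Borel set `A` the sequence `ρₙ(A)` converges
to a finite limit; moreover, in that case the limit set function is exactly the measure
`ρ.withDensity h`. -/
theorem weakL1_iff_setwise_convergence_withDensity
    {X : Type*} [MetricSpace X] [CompactSpace X] [MeasurableSpace X] [BorelSpace X]
    (ρ : Measure X) [IsFiniteMeasure ρ]
    (u : ℕ → X → ℝ) (hu : ∀ n, Integrable (u n) ρ) (hupos : ∀ n x, 0 ≤ u n x) :
    ((∃ h : X → ℝ, Integrable h ρ ∧ WeakL1Tendsto ρ u h)
      ↔ ∀ A : Set X, MeasurableSet A → ∃ c : ℝ≥0∞, c < ⊤ ∧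
          Tendsto (fun n => ρ.withDensity (fun x => ENNReal.ofReal (u n x)) A)
            atTop (nhds c))
    ∧ ∀ h : X → ℝ, Integrable h ρ → WeakL1Tendsto ρ u h →
        ∀ A : Set X, MeasurableSet A →
          Tendsto (fun n => ρ.withDensity (fun x => ENNReal.ofReal (u n x)) A)
            atTop (nhds (ρ.withDensity (fun x => ENNReal.ofReal (h x)) A)) := by
  constructor
  · constructor
    · rintro ⟨h, hh, hw⟩ A hA
      exact ⟨ρ.withDensity (fun x => ENNReal.ofReal (h x)) A,
        WeakL1Aux.wd_lt_top hh hA, WeakL1Aux.forward hu hupos hh hw hA⟩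
    · intro H
      exact WeakL1Aux.backward hu hupos H
  · intro h hh hw A hA
    exact WeakL1Aux.forward hu hupos hh hw hA
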